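/- Let K be a compact group and ρ a unitary representation on a separable Hilbert space H. If there exists f ∈ H and 0 < A ≤ B such that A‖g‖² ≤ ∫_K |⟨g, ρ(ξ)f⟩|² dξ ≤ B‖g‖² for all g ∈ H (i.e., the orbit of f is a continuous frame for H), then H is finite-dimensional. -/

import Mathlib

open MeasureTheory

/-- If the orbit of a vector under a unitary representation of a compact group is a
continuous frame for the whole space, then the space is finite-dimensional. -/
theorem continuous_frame_finite_dimensional
    {K : Type*} [Group K] [TopologicalSpace K] [IsTopologicalGroup K] [CompactSpace K]
    [SecondCountableTopology K] [MeasurableSpace K] [BorelSpace K]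
    (μ : Measure K) [μ.IsHaarMeasure] [IsProbabilityMeasure μ]
    {H : Type*} [NormedAddCommGroup H] [InnerProductSpace ℂ H] [CompleteSpace H]
    [TopologicalSpace.SeparableSpace H]
    (ρ : K →* (H ≃ₗᵢ[ℂ] H)) (hρ : Continuous fun p : K × H => ρ p.1 p.2)
    (f : H) (A B : ℝ) (hA : 0 < A) (hAB : A ≤ B)
    (hframe : ∀ g : H,
      A * ‖g‖ ^ 2 ≤ ∫ ξ, ‖(inner ℂ g (ρ ξ f) : ℂ)‖ ^ 2 ∂μ
      ∧ ∫ ξ, ‖(inner ℂ g (ρ ξ f) : ℂ)‖ ^ 2 ∂μ ≤ B * ‖g‖ ^ 2) :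
    FiniteDimensional ℂ H := by
  -- continuity of the coefficient functions
  have hcontρ : Continuous fun ξ : K => ρ ξ f :=
    hρ.comp (Continuous.prodMk continuous_id continuous_const)
  have hcont : ∀ g : H, Continuous fun ξ : K => ‖(inner ℂ g (ρ ξ f) : ℂ)‖ ^ 2 := fun g =>
    (((continuous_const.inner hcontρ)).norm.pow 2)
  have hint : ∀ g : H, Integrable (fun ξ : K => ‖(inner ℂ g (ρ ξ f) : ℂ)‖ ^ 2) μ := fun g =>
    (hcont g).integrable_of_hasCompactSupport ((isClosed_tsupport _).isCompact)
  obtain ⟨w, b, hb⟩ := exists_hilbertBasis ℂ H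
  by_contra hinf
  -- w must be infinite
  have hwinf : w.Infinite := by
    intro hwfin
    apply hinf
    have hspan : Submodule.span ℂ w = ⊤ := by
      have hd := b.dense_span
      rw [hb] at hd
      rw [Subtype.range_coe] at hd
      have hcl : IsClosed (Submodule.span ℂ w : Set H) := by
        haveI : FiniteDimensional ℂ (Submodule.span ℂ w) :=
          FiniteDimensional.span_of_finite ℂ hwfin
        exact (Submodule.span ℂ w).closed_of_finiteDimensional
      rw [← hcl.submodule_topologicalClosure_eq]
      exact hd
    have : FiniteDimensional ℂ (Submodule.span ℂ w : Submodule ℂ H) :=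
      FiniteDimensional.span_of_finite ℂ hwfin
    rw [hspan] at this
    exact this.of_injective (Submodule.topEquiv.symm.toLinearMap)
      Submodule.topEquiv.symm.injective
  -- an orthonormal sequence
  set emb := hwinf.natEmbedding
  set e : ℕ → H := fun k => (emb k : H) with he
  have horth : Orthonormal ℂ e := by
    have := b.orthonormal
    rw [hb] at this
    exact this.comp emb emb.injective
  -- choose n with n * A > ‖f‖ ^ 2
  obtain ⟨n, hn⟩ := Archimedean.arch (‖f‖ ^ 2) hA
  set N := n + 1
  have hNA : ‖f‖ ^ 2 < N * A := by
    have : (n : ℝ) * A ≥ ‖f‖ ^ 2 := by simpa [nsmul_eq_mul] using hn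
    have : (N : ℝ) * A = n * A + A := by push_cast [N]; ring
    nlinarith
  -- lower bound : N * A ≤ ∑_{k < N} ∫ ...
  have hlow : (N : ℝ) * A ≤ ∑ k ∈ Finset.range N, ∫ ξ, ‖(inner ℂ (e k) (ρ ξ f) : ℂ)‖ ^ 2 ∂μ := by
    have : ∀ k ∈ Finset.range N, A ≤ ∫ ξ, ‖(inner ℂ (e k) (ρ ξ f) : ℂ)‖ ^ 2 ∂μ := by
      intro k _
      have hnorm : ‖e k‖ = 1 := horth.1 k
      have := (hframe (e k)).1
      rwa [hnorm, one_pow, mul_one] at this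
    calc (N : ℝ) * A = ∑ _k ∈ Finset.range N, A := by
          simp [Finset.sum_const, nsmul_eq_mul]
      _ ≤ _ := Finset.sum_le_sum this
  -- swap sum and integral, apply Bessel
  have hswap : ∑ k ∈ Finset.range N, ∫ ξ, ‖(inner ℂ (e k) (ρ ξ f) : ℂ)‖ ^ 2 ∂μ
      = ∫ ξ, ∑ k ∈ Finset.range N, ‖(inner ℂ (e k) (ρ ξ f) : ℂ)‖ ^ 2 ∂μ :=
    (integral_finset_sum _ fun k _ => hint (e k)).symm
  have hbessel : ∫ ξ, ∑ k ∈ Finset.range N, ‖(inner ℂ (e k) (ρ ξ f) : ℂ)‖ ^ 2 ∂μ ≤ ‖f‖ ^ 2 := by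
    have hle : ∀ ξ : K, ∑ k ∈ Finset.range N, ‖(inner ℂ (e k) (ρ ξ f) : ℂ)‖ ^ 2 ≤ ‖f‖ ^ 2 := by
      intro ξ
      have := horth.sum_inner_products_le (ρ ξ f) (s := Finset.range N)
      simpa [(ρ ξ).norm_map] using this
    calc ∫ ξ, ∑ k ∈ Finset.range N, ‖(inner ℂ (e k) (ρ ξ f) : ℂ)‖ ^ 2 ∂μ
        ≤ ∫ _ξ, ‖f‖ ^ 2 ∂μ := by
          apply integral_mono (integrable_finset_sum _ fun k _ => hint (e k))
            (integrable_const _) hle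
      _ = ‖f‖ ^ 2 := by simp
  have : (N : ℝ) * A ≤ ‖f‖ ^ 2 := by
    calc (N : ℝ) * A ≤ _ := hlow
      _ = _ := hswap
      _ ≤ ‖f‖ ^ 2 := hbessel
  linarith
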